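/- Let X be the 3-dimensional Banach space whose unit ball is the convex hull of ±(1,1,1), ±(−1,1,1), ±(−1,−1,1), ±(1,−1,1), ±(0,0,2). The linear operator T on X defined by T(0,0,2) = (1,0,0), T(1,0,0) = (0,0,0), T(0,1,0) = (0,0,0) has operator norm 1 and numerical radius exactly 1/2. -/

import Mathlib

open Metric Set

/-- The numerical radius of a bounded linear operator. -/
noncomputable def nrad {X : Type*} [NormedAddCommGroup X] [NormedSpace ℝ X]
    (T : X →L[ℝ] X) : ℝ :=
  sSup {r : ℝ | ∃ x : X, ∃ f : X →L[ℝ] ℝ, ‖x‖ = 1 ∧ ‖f‖ = 1 ∧ f x = 1 ∧ r = |f (T x)|}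

/-- The ten vertices ±(1,1,1), ±(−1,1,1), ±(−1,−1,1), ±(1,−1,1), ±(0,0,2). -/
def biPyramidVerts : Set (Fin 3 → ℝ) :=
  {![1,1,1], ![-1,1,1], ![-1,-1,1], ![1,-1,1], ![0,0,2],
   ![-1,-1,-1], ![1,-1,-1], ![1,1,-1], ![-1,1,-1], ![0,0,-2]}

lemma arith (p q ρ a b c : ℝ) (h1 : |p+q+ρ| ≤ 1) (h2 : |-p+q+ρ| ≤ 1)
    (h3 : |-p-q+ρ| ≤ 1) (h4 : |p-q+ρ| ≤ 1) (h5 : |2*ρ| ≤ 1)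
    (hA : |a| ≤ 1) (hB : |b| ≤ 1) (hAC : |a|+|c| ≤ 2)
    (heq : a*p + b*q + c*ρ = 1) : |c/2*p| ≤ 1/2 := by
  have H1 := abs_le.mp h1
  have H2 := abs_le.mp h2
  have H3 := abs_le.mp h3
  have H4 := abs_le.mp h4
  have H5 := abs_le.mp h5
  have hPQR : |p| + |q| + |ρ| ≤ 1 := by
    rcases abs_cases p with ⟨hp, _⟩ | ⟨hp, _⟩ <;>
      rcases abs_cases q with ⟨hq, _⟩ | ⟨hq, _⟩ <;>
        rcases abs_cases ρ with ⟨hr, _⟩ | ⟨hr, _⟩ <;> linarith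
  have hR : |ρ| ≤ 1/2 := by
    rcases abs_cases ρ with ⟨hr, _⟩ | ⟨hr, _⟩ <;> linarith
  have k1 : a*p ≤ |a| * |p| := (le_abs_self _).trans (abs_mul a p).le
  have k2 : b*q ≤ |q| := (le_abs_self _).trans
    (by rw [abs_mul]; exact mul_le_of_le_one_left (abs_nonneg q) hB)
  have k3 : c*ρ ≤ |c| * |ρ| := (le_abs_self _).trans (abs_mul c ρ).le
  have key : 1 ≤ |a| * |p| + |q| + |c| * |ρ| := by linarith
  have goal2 : |c| * |p| ≤ 1 := by
    rcases le_or_gt |c| 1 with hc | hc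
    · have hp1 : |p| ≤ 1 := by linarith [abs_nonneg q, abs_nonneg ρ]
      nlinarith [abs_nonneg p, abs_nonneg c]
    · have hC2 : |c| ≤ 2 := by linarith [abs_nonneg a]
      have hA2 : |a| * |p| ≤ (2-|c|) * |p| :=
        mul_le_mul_of_nonneg_right (by linarith) (abs_nonneg p)
      have hPR : |p| ≤ |ρ| := by
        by_contra h
        push_neg at h
        nlinarith [key, hPQR]
      nlinarith [abs_nonneg p, abs_nonneg c]
  have : |c/2*p| = |c| * |p|/2 := by
    rw [abs_mul, abs_div]
    norm_num
    ring
  rw [this]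
  linarith

lemma hull_ineq {v : Fin 3 → ℝ} (hv : v ∈ convexHull ℝ biPyramidVerts) :
    |v 0| ≤ 1 ∧ |v 1| ≤ 1 ∧ |v 0| + |v 2| ≤ 2 ∧ |v 1| + |v 2| ≤ 2 := by
  have hconv : Convex ℝ {w : Fin 3 → ℝ |
      |w 0| ≤ 1 ∧ |w 1| ≤ 1 ∧ |w 0| + |w 2| ≤ 2 ∧ |w 1| + |w 2| ≤ 2} := by
    intro u hu w hw α β hα hβ hαβ
    simp only [mem_setOf_eq, Pi.add_apply, Pi.smul_apply, smul_eq_mul] at *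
    have e0 := (abs_add_le (α * u 0) (β * w 0)).trans (by
      rw [abs_mul, abs_mul, abs_of_nonneg hα, abs_of_nonneg hβ])
    have e1 := (abs_add_le (α * u 1) (β * w 1)).trans (by
      rw [abs_mul, abs_mul, abs_of_nonneg hα, abs_of_nonneg hβ])
    have e2 := (abs_add_le (α * u 2) (β * w 2)).trans (by
      rw [abs_mul, abs_mul, abs_of_nonneg hα, abs_of_nonneg hβ])
    refine ⟨?_, ?_, ?_, ?_⟩ <;> nlinarith [hu.1, hu.2.1, hu.2.2.1, hu.2.2.2,
      hw.1, hw.2.1, hw.2.2.1, hw.2.2.2]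
  refine convexHull_min ?_ hconv hv
  intro w hw
  simp only [biPyramidVerts, mem_insert_iff, mem_singleton_iff] at hw
  rcases hw with rfl|rfl|rfl|rfl|rfl|rfl|rfl|rfl|rfl|rfl <;>
    norm_num [mem_setOf_eq, Matrix.cons_val_two]

lemma seg_mem {t : ℝ} (ht : |t| ≤ 1) :
    (![t,0,0] : Fin 3 → ℝ) ∈ convexHull ℝ biPyramidVerts := by
  have hC : Convex ℝ (convexHull ℝ biPyramidVerts) := convex_convexHull ℝ _
  have hv : ∀ w ∈ biPyramidVerts, w ∈ convexHull ℝ biPyramidVerts :=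
    fun w hw => subset_convexHull ℝ _ hw
  have m1 : (![1,1,1] : Fin 3 → ℝ) ∈ convexHull ℝ biPyramidVerts := by
    apply hv; simp [biPyramidVerts]
  have m2 : (![1,-1,-1] : Fin 3 → ℝ) ∈ convexHull ℝ biPyramidVerts := by
    apply hv; simp [biPyramidVerts]
  have m3 : (![-1,1,1] : Fin 3 → ℝ) ∈ convexHull ℝ biPyramidVerts := by
    apply hv; simp [biPyramidVerts]
  have m4 : (![-1,-1,-1] : Fin 3 → ℝ) ∈ convexHull ℝ biPyramidVerts := by
    apply hv; simp [biPyramidVerts]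
  have p1 : (![1,0,0] : Fin 3 → ℝ) ∈ convexHull ℝ biPyramidVerts := by
    have := hC m1 m2 (by norm_num : (0:ℝ) ≤ 1/2) (by norm_num : (0:ℝ) ≤ 1/2) (by norm_num)
    convert this using 1
    funext i; fin_cases i <;> norm_num
  have p2 : (![-1,0,0] : Fin 3 → ℝ) ∈ convexHull ℝ biPyramidVerts := by
    have := hC m3 m4 (by norm_num : (0:ℝ) ≤ 1/2) (by norm_num : (0:ℝ) ≤ 1/2) (by norm_num)
    convert this using 1
    funext i; fin_cases i <;> norm_num
  have h1 := abs_le.mp ht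
  have := hC p1 p2 (show (0:ℝ) ≤ (1+t)/2 by linarith) (show (0:ℝ) ≤ (1-t)/2 by linarith)
    (by ring)
  convert this using 1
  funext i; fin_cases i <;> simp <;> ring

theorem stmt_12 {X : Type*} [NormedAddCommGroup X] [NormedSpace ℝ X]
    (e : X ≃ₗ[ℝ] (Fin 3 → ℝ))
    (hball : closedBall (0 : X) 1 = e ⁻¹' (convexHull ℝ biPyramidVerts))
    (T : X →L[ℝ] X)
    (hT : ∀ x : X, e (T x) = ![e x 2 / 2, 0, 0]) :
    ‖T‖ = 1 ∧ nrad T = 1 / 2 := by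
  have hmem : ∀ x : X, ‖x‖ ≤ 1 ↔ e x ∈ convexHull ℝ biPyramidVerts := by
    intro x
    rw [← mem_closedBall_zero_iff, hball, mem_preimage]
  -- lower bound on norm via functionals
  have normLB : ∀ x : X, |e x 0| ≤ ‖x‖ ∧ |e x 1| ≤ ‖x‖ ∧
      |e x 0| + |e x 2| ≤ 2*‖x‖ ∧ |e x 1| + |e x 2| ≤ 2*‖x‖ := by
    intro x
    rcases eq_or_ne x 0 with rfl | hx
    · simp
    · have hn : (0:ℝ) < ‖x‖ := norm_pos_iff.mpr hx
      set y := ‖x‖⁻¹ • x with hy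
      have hy1 : ‖y‖ ≤ 1 := by
        rw [hy, norm_smul, norm_inv, norm_norm, inv_mul_cancel₀ hn.ne']
      obtain ⟨l0, l1, l2, l3⟩ := hull_ineq ((hmem y).mp hy1)
      have hey : ∀ i, e y i = ‖x‖⁻¹ * e x i := by
        intro i; rw [hy, map_smul]; simp
      simp only [hey, abs_mul, abs_of_pos (inv_pos.mpr hn)] at l0 l1 l2 l3
      have key : ∀ s t : ℝ, ‖x‖⁻¹ * t ≤ s → t ≤ s * ‖x‖ := by
        intro s t h
        have h2 := mul_le_mul_of_nonneg_left h hn.le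
        rw [← mul_assoc, mul_inv_cancel₀ hn.ne', one_mul, mul_comm] at h2
        exact h2
      have l2' : ‖x‖⁻¹ * (|e x 0| + |e x 2|) ≤ 2 := by rw [mul_add]; exact l2
      have l3' : ‖x‖⁻¹ * (|e x 1| + |e x 2|) ≤ 2 := by rw [mul_add]; exact l3
      exact ⟨by simpa using key 1 _ l0, by simpa using key 1 _ l1,
        key 2 _ l2', key 2 _ l3'⟩
  have hUB : ∀ v ∈ convexHull ℝ biPyramidVerts, ‖e.symm v‖ ≤ 1 := by
    intro v hv
    rw [hmem]
    rwa [e.apply_symm_apply]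
  -- ‖T x‖ ≤ ‖x‖
  have hTle : ∀ x : X, ‖T x‖ ≤ ‖x‖ := by
    intro x
    rcases eq_or_ne x 0 with rfl | hx
    · simp
    · have hn : (0:ℝ) < ‖x‖ := norm_pos_iff.mpr hx
      have hc : |e x 2| ≤ 2*‖x‖ := by
        have := (normLB x).2.2.1
        have := abs_nonneg (e x 0)
        linarith
      set t := e x 2 / (2*‖x‖) with htdef
      have ht : |t| ≤ 1 := by
        rw [htdef, abs_div, abs_of_pos (by linarith : (0:ℝ) < 2*‖x‖),
          div_le_one (by linarith)]
        exact hc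
      have hTx : T x = ‖x‖ • e.symm ![t,0,0] := by
        apply e.injective
        rw [hT, map_smul, e.apply_symm_apply]
        funext i
        fin_cases i <;> simp [htdef] <;> field_simp <;> ring
      rw [hTx, norm_smul, norm_norm]
      have := hUB _ (seg_mem ht)
      nlinarith
  -- x₀
  obtain ⟨x₀, hex₀⟩ : ∃ x₀ : X, e x₀ = ![0,0,2] := ⟨e.symm _, e.apply_symm_apply _⟩
  have hx₀le : ‖x₀‖ ≤ 1 := by
    rw [hmem, hex₀]
    exact subset_convexHull ℝ _ (by simp [biPyramidVerts])
  have hx₀ge : (1:ℝ) ≤ ‖x₀‖ := by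
    have := (normLB x₀).2.2.2
    rw [hex₀] at this
    norm_num [Matrix.cons_val_two] at this
    linarith
  have hx₀ : ‖x₀‖ = 1 := le_antisymm hx₀le (by linarith)
  have hTx₀ : T x₀ = e.symm ![1,0,0] := by
    apply e.injective
    rw [hT, e.apply_symm_apply, hex₀]
    norm_num [Matrix.cons_val_two]
  have hTx₀norm : (1:ℝ) ≤ ‖T x₀‖ := by
    have h := (normLB (T x₀)).1
    have h2 : e (T x₀) = ![1,0,0] := by rw [hT, hex₀]; norm_num [Matrix.cons_val_two]
    rw [h2] at h
    norm_num at h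
    linarith
  have hTnorm : ‖T‖ = 1 := by
    apply le_antisymm
    · exact T.opNorm_le_bound zero_le_one (fun x => by rw [one_mul]; exact hTle x)
    · have := T.le_opNorm x₀
      rw [hx₀, mul_one] at this
      linarith
  -- the functional f
  have : FiniteDimensional ℝ X := Module.Finite.equiv e.symm
  let fL : X →ₗ[ℝ] ℝ :=
    { toFun := fun x => (e x 0 + e x 2)/2
      map_add' := fun x y => by simp [map_add]; ring
      map_smul' := fun c x => by simp [map_smul]; ring }
  let f : X →L[ℝ] ℝ := LinearMap.toContinuousLinearMap fL
  have hfval : ∀ x : X, f x = (e x 0 + e x 2)/2 := fun x => rfl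
  have hfle : ‖f‖ ≤ 1 := by
    apply f.opNorm_le_bound zero_le_one
    intro x
    rw [one_mul, hfval]
    obtain ⟨_, _, l2, _⟩ := normLB x
    calc ‖(e x 0 + e x 2)/2‖ = |e x 0 + e x 2|/2 := by
          rw [Real.norm_eq_abs, abs_div, abs_two]
      _ ≤ (|e x 0| + |e x 2|)/2 := by linarith [abs_add_le (e x 0) (e x 2)]
      _ ≤ ‖x‖ := by linarith
  have hfx₀ : f x₀ = 1 := by rw [hfval, hex₀]; norm_num [Matrix.cons_val_two]
  have hfnorm : ‖f‖ = 1 := by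
    apply le_antisymm hfle
    have := f.le_opNorm x₀
    rw [hx₀, mul_one, hfx₀] at this
    simpa using this
  have hfTx₀ : |f (T x₀)| = 1/2 := by
    rw [hTx₀, hfval, e.apply_symm_apply]
    norm_num [Matrix.cons_val_two]
  refine ⟨hTnorm, ?_⟩
  -- nrad
  rw [nrad]
  have hmem' : (1/2 : ℝ) ∈ {r : ℝ | ∃ x : X, ∃ g : X →L[ℝ] ℝ,
      ‖x‖ = 1 ∧ ‖g‖ = 1 ∧ g x = 1 ∧ r = |g (T x)|} :=
    ⟨x₀, f, hx₀, hfnorm, hfx₀, hfTx₀.symm⟩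
  have hbd : ∀ r ∈ {r : ℝ | ∃ x : X, ∃ g : X →L[ℝ] ℝ,
      ‖x‖ = 1 ∧ ‖g‖ = 1 ∧ g x = 1 ∧ r = |g (T x)|}, r ≤ 1/2 := by
    rintro r ⟨x, g, hx1, hg1, hgx, rfl⟩
    set p := g (e.symm ![1,0,0]) with hp
    set q := g (e.symm ![0,1,0]) with hq
    set ρ := g (e.symm ![0,0,1]) with hρ
    have decomp : ∀ v : Fin 3 → ℝ, g (e.symm v) = v 0 * p + v 1 * q + v 2 * ρ := by
      intro v
      have hv : e.symm v = v 0 • e.symm ![1,0,0] + v 1 • e.symm ![0,1,0]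
          + v 2 • e.symm ![0,0,1] := by
        rw [← map_smul, ← map_smul, ← map_smul, ← map_add, ← map_add]
        congr 1
        funext i
        fin_cases i <;> simp
      rw [hv, map_add, map_add, map_smul, map_smul, map_smul, smul_eq_mul,
        smul_eq_mul, smul_eq_mul]
    have gbound : ∀ v ∈ biPyramidVerts, |g (e.symm v)| ≤ 1 := by
      intro v hv
      have := g.le_opNorm (e.symm v)
      have h2 := hUB v (subset_convexHull ℝ _ hv)
      rw [hg1, one_mul] at this
      calc |g (e.symm v)| = ‖g (e.symm v)‖ := rfl
        _ ≤ ‖e.symm v‖ := this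
        _ ≤ 1 := h2
    have h1 : |p + q + ρ| ≤ 1 := by
      have := gbound ![1,1,1] (by simp [biPyramidVerts])
      rw [decomp] at this
      norm_num [Matrix.cons_val_two] at this
      convert this using 2 <;> ring
    have h2 : |-p + q + ρ| ≤ 1 := by
      have := gbound ![-1,1,1] (by simp [biPyramidVerts])
      rw [decomp] at this
      norm_num [Matrix.cons_val_two] at this
      convert this using 2 <;> ring
    have h3 : |-p - q + ρ| ≤ 1 := by
      have := gbound ![-1,-1,1] (by simp [biPyramidVerts])
      rw [decomp] at this
      norm_num [Matrix.cons_val_two] at this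
      convert this using 2 <;> ring
    have h4 : |p - q + ρ| ≤ 1 := by
      have := gbound ![1,-1,1] (by simp [biPyramidVerts])
      rw [decomp] at this
      norm_num [Matrix.cons_val_two] at this
      convert this using 2 <;> ring
    have h5 : |2*ρ| ≤ 1 := by
      have := gbound ![0,0,2] (by simp [biPyramidVerts])
      rw [decomp] at this
      norm_num [Matrix.cons_val_two] at this
      rw [abs_mul, abs_two]; exact this
    obtain ⟨lA, lB, lAC, _⟩ := normLB x
    rw [hx1] at lA lB lAC
    norm_num at lAC
    have heq : e x 0 * p + e x 1 * q + e x 2 * ρ = 1 := by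
      have : g x = g (e.symm (e x)) := by rw [e.symm_apply_apply]
      rw [this, decomp] at hgx
      exact hgx
    have hgTx : g (T x) = e x 2 / 2 * p := by
      have hTxv : T x = e.symm ![e x 2 / 2, 0, 0] := by
        apply e.injective
        rw [hT, e.apply_symm_apply]
      rw [hTxv, decomp]
      norm_num [Matrix.cons_val_two]
    rw [hgTx]
    exact arith p q ρ (e x 0) (e x 1) (e x 2) h1 h2 h3 h4 h5 lA lB lAC heq
  exact le_antisymm (csSup_le ⟨1/2, hmem'⟩ hbd) (le_csSup ⟨1/2, hbd⟩ hmem')
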